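/- Define V(r) := Λ(πr + θ(r)/2) - Λ(πr - θ(r)/2), where Λ is the Lobachevsky function Λ(z) = -∫₀^z log|2 sin x| dx and θ(r) = arccos(cos(2πr) - 1/2). Then for 2/3 < r < 1, the derivative V'(r) = 2π log|2 sin(πr - θ(r)/2)|. -/

import Mathlib

open Real

noncomputable def Lob (z : ℝ) : ℝ := -∫ x in (0 : ℝ)..z, Real.log |2 * Real.sin x|

noncomputable def theta (r : ℝ) : ℝ := Real.arccos (Real.cos (2 * π * r) - 1 / 2)


open MeasureTheory Set intervalIntegral


lemma intInt_log01 : IntervalIntegrable Real.log volume 0 1 := by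
  have h : IntegrableOn (fun x => -Real.log x) (Set.Ioc (0:ℝ) 1) volume := by
    apply intervalIntegral.integrableOn_deriv_of_nonneg
      (g := fun x => x - x * Real.log x)
    · exact (continuous_id.sub Real.continuous_mul_log).continuousOn
    · intro x hx
      have := (hasDerivAt_id' x).sub (Real.hasDerivAt_mul_log (ne_of_gt hx.1))
      refine this.congr_deriv ?_
      ring
    · intro x hx
      simpa using Real.log_nonpos hx.1.le hx.2.le
  rw [intervalIntegrable_iff_integrableOn_Ioc_of_le zero_le_one]
  have := h.neg
  have e : (-fun x => -Real.log x) = Real.log := by funext x; simp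
  rwa [e] at this

lemma intInt_log (a b : ℝ) : IntervalIntegrable Real.log volume a b := by
  have key : ∀ c : ℝ, 0 ≤ c → IntervalIntegrable Real.log volume 0 c := by
    intro c hc
    rcases le_or_gt c 1 with h | h
    · apply intInt_log01.mono_set
      rw [Set.uIcc_of_le hc, Set.uIcc_of_le zero_le_one]
      exact Set.Icc_subset_Icc le_rfl h
    · apply intInt_log01.trans
      apply intervalIntegrable_log
      rw [Set.uIcc_of_le h.le]
      intro h0
      exact absurd h0.1 (by norm_num)
  have key2 : ∀ c : ℝ, IntervalIntegrable Real.log volume 0 c := by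
    intro c
    rcases le_or_gt 0 c with h | h
    · exact key c h
    · have := (key (-c) (by linarith)).comp_mul_left (c := -1)
      simp only [neg_one_mul, Real.log_neg_eq_log] at this
      simpa using this
  exact (key2 a).symm.trans (key2 b)


lemma sin_lb {x : ℝ} (h0 : 0 < x) (h1 : x ≤ 3*π/2) :
    4/(3*π^2) * (x * |x - π|) ≤ |Real.sin x| := by
  have hπ := Real.pi_pos
  rcases le_or_gt x (π/2) with h | h
  · rw [abs_of_nonpos (by linarith), abs_of_nonneg
      (Real.sin_nonneg_of_nonneg_of_le_pi h0.le (by linarith))]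
    have hs := Real.mul_le_sin h0.le h
    have h2 : 4/(3*π^2) * (x * (π - x)) ≤ 2/π * x := by
      rw [div_mul_eq_mul_div, div_mul_eq_mul_div, div_le_div_iff₀ (by positivity) hπ]
      nlinarith [mul_nonneg (mul_nonneg h0.le hπ.le) (show (0:ℝ) ≤ 2*π + 4*x by linarith)]
    linarith
  rcases le_or_gt x π with h' | h'
  · rw [abs_of_nonpos (by linarith), abs_of_nonneg
      (Real.sin_nonneg_of_nonneg_of_le_pi h0.le h')]
    have hs : 2/π * (π - x) ≤ Real.sin x := by
      have := Real.mul_le_sin (x := π - x) (by linarith) (by linarith)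
      rwa [Real.sin_pi_sub] at this
    have h2 : 4/(3*π^2) * (x * (π - x)) ≤ 2/π * (π - x) := by
      rw [div_mul_eq_mul_div, div_mul_eq_mul_div, div_le_div_iff₀ (by positivity) hπ]
      nlinarith [mul_nonneg (mul_nonneg (show (0:ℝ) ≤ π - x by linarith) hπ.le)
        (show (0:ℝ) ≤ 3*π - 2*x by linarith)]
    linarith
  · have hs : 2/π * (x - π) ≤ Real.sin (x - π) := Real.mul_le_sin (by linarith) (by linarith)
    rw [Real.sin_sub_pi] at hs
    have hsx : Real.sin x ≤ 0 := by
      have : (0:ℝ) ≤ 2/π * (x - π) := by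
        apply mul_nonneg (by positivity) (by linarith)
      linarith
    rw [abs_of_nonneg (by linarith), abs_of_nonpos hsx]
    have h2 : 4/(3*π^2) * (x * (x - π)) ≤ 2/π * (x - π) := by
      rw [div_mul_eq_mul_div, div_mul_eq_mul_div, div_le_div_iff₀ (by positivity) hπ]
      nlinarith [mul_nonneg (mul_nonneg (show (0:ℝ) ≤ x - π by linarith) hπ.le)
        (show (0:ℝ) ≤ 3*π - 2*x by linarith)]
    linarith



lemma meas_f : Measurable (fun x => Real.log |2 * Real.sin x|) :=
  Real.measurable_log.comp (continuous_abs.comp (continuous_const.mul Real.continuous_sin)).measurable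

lemma fInt : IntervalIntegrable (fun x => Real.log |2 * Real.sin x|) volume 0 (3*π/2) := by
  have hπ := Real.pi_pos
  have hT : (0:ℝ) ≤ 3*π/2 := by linarith
  have hg : IntervalIntegrable
      (fun x => (Real.log 2 - Real.log (4/(3*π^2)) + |Real.log x|) + |Real.log (x - π)|)
      volume 0 (3*π/2) := by
    apply IntervalIntegrable.add
    · exact (intervalIntegrable_const (c := _)).add (intInt_log 0 (3*π/2)).abs
    · have h2 := ((intInt_log (-π) (3*π/2 - π)).abs).comp_sub_right π
      have e1 : -π + π = (0:ℝ) := by ring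
      have e2 : 3*π/2 - π + π = 3*π/2 := by ring
      rwa [e1, e2] at h2
  apply hg.mono_fun (meas_f.aestronglyMeasurable)
  have hmem : ∀ᵐ x ∂(volume.restrict (Set.uIoc (0:ℝ) (3*π/2))), x ∈ Set.uIoc (0:ℝ) (3*π/2) :=
    ae_restrict_mem measurableSet_uIoc
  have hne : ∀ᵐ x ∂(volume.restrict (Set.uIoc (0:ℝ) (3*π/2))), x ≠ π := by
    rw [ae_iff]
    have e : {x : ℝ | ¬ x ≠ π} = {π} := by ext y; simp
    rw [e]
    exact le_antisymm (le_trans (Measure.restrict_le_self _) (by simp)) (zero_le)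
  filter_upwards [hmem, hne] with x hx hxπ
  rw [Set.uIoc_of_le hT] at hx
  obtain ⟨hx0, hxT⟩ := hx
  have hlb := sin_lb hx0 hxT
  have hxd : 0 < |x - π| := abs_pos.2 (sub_ne_zero.2 hxπ)
  have hc : (0:ℝ) < 4/(3*π^2) := by positivity
  have hsin : 0 < |Real.sin x| := lt_of_lt_of_le (by positivity) hlb
  have hf : Real.log |2 * Real.sin x| = Real.log 2 + Real.log |Real.sin x| := by
    rw [abs_mul, abs_two, Real.log_mul two_ne_zero (ne_of_gt hsin)]
  have hls_nonpos : Real.log |Real.sin x| ≤ 0 :=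
    Real.log_nonpos (abs_nonneg _) (abs_le.2 ⟨Real.neg_one_le_sin x, Real.sin_le_one x⟩)
  have hlog2 : (0:ℝ) ≤ Real.log 2 := Real.log_nonneg one_le_two
  have hlsb : Real.log (4/(3*π^2)) + (Real.log x + Real.log |x - π|) ≤ Real.log |Real.sin x| := by
    have := Real.log_le_log (by positivity) hlb
    rwa [Real.log_mul (ne_of_gt hc) (by positivity),
      Real.log_mul (ne_of_gt hx0) (ne_of_gt hxd)] at this
  rw [Real.norm_eq_abs, Real.norm_eq_abs]
  apply le_trans _ (le_abs_self _)
  rw [hf]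
  have h1 : abs (Real.log 2 + Real.log |Real.sin x|) ≤ Real.log 2 - Real.log |Real.sin x| := by
    rw [abs_le]
    constructor <;> nlinarith
  apply h1.trans
  have h2 : -Real.log |Real.sin x| ≤
      -Real.log (4/(3*π^2)) + (|Real.log x| + |Real.log (x - π)|) := by
    have a1 : -Real.log x ≤ |Real.log x| := neg_le_abs _
    have a2 : -Real.log |x - π| ≤ |Real.log (x - π)| := by
      rw [Real.log_abs]; exact neg_le_abs _
    linarith
  linarith





lemma hasDerivAt_Lob {z : ℝ} (h0 : 0 < z) (hT : z ≤ 3*π/2) (hs : Real.sin z ≠ 0) :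
    HasDerivAt Lob (-Real.log |2 * Real.sin z|) z := by
  have hint : IntervalIntegrable (fun x => Real.log |2 * Real.sin x|) volume 0 z := by
    apply fInt.mono_set
    rw [Set.uIcc_of_le h0.le, Set.uIcc_of_le (h0.le.trans hT)]
    exact Set.Icc_subset_Icc le_rfl hT
  have hmeas : StronglyMeasurableAtFilter (fun x => Real.log |2 * Real.sin x|) (nhds z) volume :=
    meas_f.stronglyMeasurable.stronglyMeasurableAtFilter
  have hcont : ContinuousAt (fun x => Real.log |2 * Real.sin x|) z := by
    apply ContinuousAt.comp (Real.continuousAt_log (by simpa using hs))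
    exact (continuous_abs.comp (continuous_const.mul Real.continuous_sin)).continuousAt
  have H := (intervalIntegral.integral_hasDerivAt_right hint hmeas hcont).neg
  exact H

theorem stmt4 (r : ℝ) (h1 : 2 / 3 < r) (h2 : r < 1) :
    HasDerivAt (fun s => Lob (π * s + theta s / 2) - Lob (π * s - theta s / 2))
      (2 * π * Real.log |2 * Real.sin (π * r - theta r / 2)|) r := by
  have hπ := Real.pi_pos
  -- cos (2πr) > -1/2
  have hcos_gt : Real.cos (2*π*r) > -(1/2) := by
    have e : 2*π*r = 2*π - 2*π*(1-r) := by ring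
    rw [e, Real.cos_two_pi_sub]
    have h23 : Real.cos (2*π/3) = -(1/2) := by
      have : 2*π/3 = π - π/3 := by ring
      rw [this, Real.cos_pi_sub, Real.cos_pi_div_three]
    rw [← h23]
    apply Real.cos_lt_cos_of_nonneg_of_le_pi (by nlinarith) (by linarith) (by nlinarith)
  have hu1 : Real.cos (2*π*r) - 1/2 ≤ 1 := by linarith [Real.cos_le_one (2*π*r)]
  have hu1' : Real.cos (2*π*r) - 1/2 < 1 := by linarith [Real.cos_le_one (2*π*r)]
  have hu2 : -1 < Real.cos (2*π*r) - 1/2 := by linarith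
  have hθcos : Real.cos (theta r) = Real.cos (2*π*r) - 1/2 :=
    Real.cos_arccos (by linarith) hu1
  have hθpos : 0 < theta r := Real.arccos_pos.2 hu1'
  have hθle : theta r ≤ π := Real.arccos_le_pi _
  set b := π * r - theta r / 2 with hbdef
  set a := π * r + theta r / 2 with hadef
  have hb0 : 0 < b := by rw [hbdef]; nlinarith
  have hbπ : b < π := by rw [hbdef]; nlinarith
  have hsinb : 0 < Real.sin b := Real.sin_pos_of_pos_of_lt_pi hb0 hbπ
  have ha0 : 0 < a := by rw [hadef]; nlinarith
  have haT : a ≤ 3*π/2 := by rw [hadef]; nlinarith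
  have hbT : b ≤ 3*π/2 := by rw [hbdef]; nlinarith
  -- the key identity
  have hprod : 2 * Real.sin a * Real.sin b = -(1/2) := by
    have h := Real.cos_sub_cos (theta r) (2*π*r)
    have e1 : (theta r + 2*π*r)/2 = a := by rw [hadef]; ring
    have e2 : (theta r - 2*π*r)/2 = -b := by rw [hbdef]; ring
    rw [e1, e2, Real.sin_neg] at h
    rw [hθcos] at h
    nlinarith [h]
  have hsina : Real.sin a ≠ 0 := by
    intro h
    rw [h] at hprod
    norm_num at hprod
  -- sum of logs
  have hne1 : |2 * Real.sin a| ≠ 0 := by simpa using hsina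
  have hne2 : |2 * Real.sin b| ≠ 0 := by simpa using (ne_of_gt hsinb)
  have hsum : Real.log |2 * Real.sin a| + Real.log |2 * Real.sin b| = 0 := by
    rw [← Real.log_mul hne1 hne2, ← abs_mul]
    have : 2 * Real.sin a * (2 * Real.sin b) = -1 := by nlinarith [hprod]
    rw [this]
    norm_num
  -- derivative of theta
  have hlin : HasDerivAt (fun s : ℝ => 2*π*s) (2*π) r := by
    simpa using (hasDerivAt_id r).const_mul (2*π)
  have hu : HasDerivAt (fun s : ℝ => Real.cos (2*π*s) - 1/2)
      (-Real.sin (2*π*r) * (2*π)) r := hlin.cos.sub_const _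
  have hθ : HasDerivAt theta
      (-(1 / Real.sqrt (1 - (Real.cos (2*π*r) - 1/2) ^ 2)) * (-Real.sin (2*π*r) * (2*π))) r :=
    (Real.hasDerivAt_arccos (ne_of_gt hu2) (ne_of_lt hu1')).comp r hu
  set c := -(1 / Real.sqrt (1 - (Real.cos (2*π*r) - 1/2) ^ 2)) * (-Real.sin (2*π*r) * (2*π))
    with hcdef
  have hπs : HasDerivAt (fun s : ℝ => π * s) π r := by
    simpa using (hasDerivAt_id r).const_mul π
  have hAin : HasDerivAt (fun s => π * s + theta s / 2) (π + c / 2) r :=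
    hπs.add (hθ.div_const 2)
  have hBin : HasDerivAt (fun s => π * s - theta s / 2) (π - c / 2) r :=
    hπs.sub (hθ.div_const 2)
  have hLa : HasDerivAt Lob (-Real.log |2 * Real.sin a|) a := hasDerivAt_Lob ha0 haT hsina
  have hLb : HasDerivAt Lob (-Real.log |2 * Real.sin b|) b := hasDerivAt_Lob hb0 hbT
    (ne_of_gt hsinb)
  have hA : HasDerivAt (fun s => Lob (π * s + theta s / 2))
      (-Real.log |2 * Real.sin a| * (π + c / 2)) r := HasDerivAt.comp (h₂ := Lob) r hLa hAin
  have hB : HasDerivAt (fun s => Lob (π * s - theta s / 2))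
      (-Real.log |2 * Real.sin b| * (π - c / 2)) r := HasDerivAt.comp (h₂ := Lob) r hLb hBin
  have := hA.sub hB
  refine this.congr_deriv ?_
  have hLa_eq : Real.log |2 * Real.sin a| = -Real.log |2 * Real.sin b| := by linarith
  rw [hLa_eq]
  ring
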